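/- Let S and A be measurable spaces, δ a real discount factor with 0 < δ < 1, K a Markov kernel from S × A to S, r : S × A → ℝ a bounded measurable reward, π : S → A a measurable stationary policy with value V_π, and s ∈ S, a ∈ A. Then the expected discounted reward of the one-shot-deviation policy that plays action a in period 0 at state s and follows π from period 1 onward equals (1 − δ)·r(s, a) + δ·∫ V_π(s′) ∂K(s, a); that is, the payoff-to-go of a one-shot deviation decomposes into the current weighted utility plus the discounted expected continuation value under the stationary policy's value function. -/

import Mathlib

open MeasureTheory ProbabilityTheory

/-- Prepending an initial state to a trajectory. -/
def prepend {S : Type*} (s : S) (ω : ℕ → S) : ℕ → S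
  | 0 => s
  | n + 1 => ω n

/-- Bochner-integral version of the bind formula for Markov kernels and bounded
measurable functions. -/
lemma my_integral_bind {α β : Type*} [MeasurableSpace α] [MeasurableSpace β]
    (μ : Measure α) [IsProbabilityMeasure μ] (κ : Kernel α β) [IsMarkovKernel κ]
    (f : β → ℝ) (hf : Measurable f) (C : ℝ) (hfC : ∀ b, |f b| ≤ C) :
    ∫ b, f b ∂(μ.bind fun a => κ a) = ∫ a, ∫ b, f b ∂(κ a) ∂μ := by
  have hbind : (μ.bind fun a => κ a) = (μ ⊗ₘ κ).snd := by
    ext u hu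
    rw [Measure.bind_apply hu (Kernel.measurable κ).aemeasurable, Measure.snd_apply hu,
      Measure.compProd_apply (measurable_snd hu)]
    rfl
  haveI : IsProbabilityMeasure (μ ⊗ₘ κ) := by
    constructor
    rw [Measure.compProd_apply_univ, measure_univ]
  have hint : Integrable (fun p : α × β => f p.2) (μ ⊗ₘ κ) := by
    refine (integrable_const C).mono'
      ((hf.comp measurable_snd).aestronglyMeasurable) (ae_of_all _ fun p => ?_)
    rw [Real.norm_eq_abs]; exact hfC p.2
  rw [hbind, Measure.snd,
    integral_map measurable_snd.aemeasurable hf.aestronglyMeasurable,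
    Measure.integral_compProd hint]

theorem one_shot_deviation_payoff_decomposition
    {S A : Type*} [MeasurableSpace S] [MeasurableSpace A]
    (δ : ℝ) (hδ0 : 0 < δ) (hδ1 : δ < 1)
    (K : Kernel (S × A) S) [IsMarkovKernel K]
    (r : S × A → ℝ) (hr_meas : Measurable r) (hr_bd : ∃ C, ∀ p, |r p| ≤ C)
    (π : S → A) (hπ_meas : Measurable π)
    (Pπ : S → Measure (ℕ → S)) (hP_meas : Measurable Pπ)
    (hP_prob : ∀ s, IsProbabilityMeasure (Pπ s))
    (hP_rec : ∀ s, Pπ s = (K (s, π s)).bind fun s₁ => (Pπ s₁).map (prepend s))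
    (Vπ : S → ℝ) (hV_meas : Measurable Vπ) (hV_bd : ∃ C, ∀ s, |Vπ s| ≤ C)
    (hV_bellman : ∀ s, Vπ s = (1 - δ) * r (s, π s) + δ * ∫ s', Vπ s' ∂(K (s, π s)))
    (s : S) (a : A) :
    ∫ ω, (∑' t : ℕ, δ ^ t * (1 - δ) * r (ω t, if t = 0 then a else π (ω t)))
        ∂((K (s, a)).bind fun s₁ => (Pπ s₁).map (prepend s))
      = (1 - δ) * r (s, a) + δ * ∫ s', Vπ s' ∂(K (s, a)) := by
  classical
  obtain ⟨C₀, hC₀⟩ := hr_bd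
  set C : ℝ := max C₀ 0 with hC
  have hC0 : (0:ℝ) ≤ C := le_max_right _ _
  have hrC : ∀ p, |r p| ≤ C := fun p => (hC₀ p).trans (le_max_left _ _)
  have h1δ : (0:ℝ) < 1 - δ := by linarith
  -- summability of discounted sums
  have hsum : ∀ v : ℕ → ℝ, (∀ t, |v t| ≤ C) →
      Summable (fun t : ℕ => δ ^ t * (1 - δ) * v t) := by
    intro v hv
    refine Summable.of_norm_bounded (g := fun t => δ ^ t * ((1 - δ) * C))
      ((summable_geometric_of_lt_one hδ0.le hδ1).mul_right _) fun t => ?_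
    rw [Real.norm_eq_abs, abs_mul, abs_mul, abs_pow, abs_of_pos hδ0, abs_of_pos h1δ,
      mul_assoc]
    exact mul_le_mul_of_nonneg_left
      (mul_le_mul_of_nonneg_left (hv t) h1δ.le) (pow_nonneg hδ0.le t)
  -- uniform bound on discounted sums
  have htsum_bd : ∀ v : ℕ → ℝ, (∀ t, |v t| ≤ C) →
      |∑' t : ℕ, δ ^ t * (1 - δ) * v t| ≤ C := by
    intro v hv
    have h1 : |∑' t : ℕ, δ ^ t * (1 - δ) * v t| ≤ ∑' t : ℕ, δ ^ t * ((1 - δ) * C) := by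
      rw [← Real.norm_eq_abs]
      refine norm_tsum_le_tsum_norm ?_ |>.trans (Summable.tsum_le_tsum (fun t => ?_) ?_ ?_)
      · exact (hsum v hv).norm
      · rw [Real.norm_eq_abs, abs_mul, abs_mul, abs_pow, abs_of_pos hδ0, abs_of_pos h1δ,
          mul_assoc]
        exact mul_le_mul_of_nonneg_left
          (mul_le_mul_of_nonneg_left (hv t) h1δ.le) (pow_nonneg hδ0.le t)
      · exact (hsum v hv).norm
      · exact (summable_geometric_of_lt_one hδ0.le hδ1).mul_right _
    have h2 : ∑' t : ℕ, δ ^ t * ((1 - δ) * C) = C := by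
      rw [tsum_mul_right, tsum_geometric_of_lt_one hδ0.le hδ1]
      field_simp
    linarith [h1, h2 ▸ h1]
  -- the on-path discounted payoff function
  set g : (ℕ → S) → ℝ := fun ω => ∑' t : ℕ, δ ^ t * (1 - δ) * r (ω t, π (ω t))
    with hg_def
  have hg_bd : ∀ ω, |g ω| ≤ C := fun ω => htsum_bd _ fun t => hrC _
  have hg_meas : Measurable g := by
    apply measurable_of_tendsto_metrizable
      (f := fun n ω => ∑ t ∈ Finset.range n, δ ^ t * (1 - δ) * r (ω t, π (ω t)))
    · intro n
      refine Finset.measurable_sum _ fun t _ => Measurable.const_mul ?_ _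
      exact hr_meas.comp ((measurable_pi_apply t).prodMk
        (hπ_meas.comp (measurable_pi_apply t)))
    · rw [tendsto_pi_nhds]
      intro ω
      exact (hsum _ fun t => hrC _).hasSum.tendsto_sum_nat
  -- prepend is measurable
  have hprep : ∀ s₀ : S, Measurable (prepend s₀ : (ℕ → S) → ℕ → S) := by
    intro s₀
    apply measurable_pi_lambda
    intro n
    cases n with
    | zero => exact measurable_const
    | succ k => exact measurable_pi_apply k
  -- splitting of the on-path payoff
  have hg_split : ∀ (s₀ : S) (ω : ℕ → S),
      g (prepend s₀ ω) = (1 - δ) * r (s₀, π s₀) + δ * g ω := by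
    intro s₀ ω
    rw [hg_def]
    simp only
    rw [Summable.tsum_eq_zero_add (hsum _ fun t => hrC _)]
    have h1 : ∀ t : ℕ, δ ^ (t + 1) * (1 - δ) * r (prepend s₀ ω (t + 1), π (prepend s₀ ω (t + 1)))
        = δ * (δ ^ t * (1 - δ) * r (ω t, π (ω t))) := by
      intro t
      show δ ^ (t + 1) * (1 - δ) * r (ω t, π (ω t)) = _
      ring
    simp only [h1]
    rw [tsum_mul_left]
    show δ ^ 0 * (1 - δ) * r (s₀, π s₀) + δ * g ω = _
    rw [pow_zero, one_mul]
  -- value of the trajectory measure as a kernel; measurability of the integral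
  set κP : Kernel S (ℕ → S) := { toFun := Pπ, measurable' := hP_meas } with hκP
  haveI : IsMarkovKernel κP := ⟨fun s => hP_prob s⟩
  set W : S → ℝ := fun s₀ => ∫ ω, g ω ∂(Pπ s₀) with hW_def
  have hW_meas : Measurable W := by
    have := MeasureTheory.StronglyMeasurable.integral_kernel_prod_right'
      (κ := κP) (f := fun p : S × (ℕ → S) => g p.2)
      ((hg_meas.comp measurable_snd).stronglyMeasurable)
    exact this.measurable
  have hW_bd : ∀ s₀, |W s₀| ≤ C := by
    intro s₀
    haveI := hP_prob s₀
    rw [← Real.norm_eq_abs]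
    calc ‖∫ ω, g ω ∂(Pπ s₀)‖ ≤ C * ((Pπ s₀) Set.univ).toReal :=
          norm_integral_le_of_norm_le_const (ae_of_all _ fun ω => by
            rw [Real.norm_eq_abs]; exact hg_bd ω)
      _ = C := by simp
  -- the key decomposition, parametric in the integrand
  have key : ∀ (s₀ : S) (b : A) (f : (ℕ → S) → ℝ), Measurable f → (∀ ω, |f ω| ≤ C) →
      (∀ ω, f (prepend s₀ ω) = (1 - δ) * r (s₀, b) + δ * g ω) →
      ∫ ω, f ω ∂((K (s₀, b)).bind fun s₁ => (Pπ s₁).map (prepend s₀))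
        = (1 - δ) * r (s₀, b) + δ * ∫ s₁, W s₁ ∂(K (s₀, b)) := by
    intro s₀ b f hf_meas hf_bd hf_split
    set κM : Kernel S (ℕ → S) :=
      { toFun := fun s₁ => (Pπ s₁).map (prepend s₀),
        measurable' := (Measure.measurable_map _ (hprep s₀)).comp hP_meas } with hκM
    haveI : IsMarkovKernel κM := by
      constructor
      intro s₁
      haveI := hP_prob s₁
      exact Measure.isProbabilityMeasure_map (hprep s₀).aemeasurable
    have hinner : ∀ s₁ : S, ∫ ω, f ω ∂(κM s₁) = (1 - δ) * r (s₀, b) + δ * W s₁ := by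
      intro s₁
      haveI := hP_prob s₁
      have : ∫ ω, f ω ∂(κM s₁) = ∫ ω, f (prepend s₀ ω) ∂(Pπ s₁) := by
        show ∫ ω, f ω ∂((Pπ s₁).map (prepend s₀)) = _
        rw [integral_map (hprep s₀).aemeasurable hf_meas.aestronglyMeasurable]
      rw [this]
      have heq : ∀ ω, f (prepend s₀ ω) = (1 - δ) * r (s₀, b) + δ * g ω := hf_split
      simp only [heq]
      have hgi : Integrable g (Pπ s₁) :=
        (integrable_const C).mono' hg_meas.aestronglyMeasurable
          (ae_of_all _ fun ω => by rw [Real.norm_eq_abs]; exact hg_bd ω)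
      rw [integral_add (integrable_const _) (hgi.const_mul δ), integral_const,
        integral_const_mul]
      simp [hW_def]
    have := my_integral_bind (K (s₀, b)) κM f hf_meas C hf_bd
    rw [show ((K (s₀, b)).bind fun s₁ => (Pπ s₁).map (prepend s₀))
        = (K (s₀, b)).bind fun s₁ => κM s₁ from rfl, this]
    simp only [hinner]
    have hWi : Integrable W (K (s₀, b)) :=
      (integrable_const C).mono' hW_meas.aestronglyMeasurable
        (ae_of_all _ fun s₁ => by rw [Real.norm_eq_abs]; exact hW_bd s₁)
    rw [integral_add (integrable_const _) (hWi.const_mul δ), integral_const,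
      integral_const_mul]
    simp
  -- W satisfies the same Bellman equation as Vπ
  have hW_bellman : ∀ s₀, W s₀ = (1 - δ) * r (s₀, π s₀) + δ * ∫ s₁, W s₁ ∂(K (s₀, π s₀)) := by
    intro s₀
    have : W s₀ = ∫ ω, g ω ∂((K (s₀, π s₀)).bind fun s₁ => (Pπ s₁).map (prepend s₀)) := by
      rw [hW_def]
      simp only
      rw [← hP_rec s₀]
    rw [this]
    exact key s₀ (π s₀) g hg_meas hg_bd (hg_split s₀)
  -- uniqueness of bounded solutions: W = Vπ
  obtain ⟨CV, hCV⟩ := hV_bd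
  have hWV : ∀ s₀, W s₀ = Vπ s₀ := by
    intro s₀
    set d : S → ℝ := fun x => W x - Vπ x with hd_def
    have hd_meas : Measurable d := hW_meas.sub hV_meas
    have hd_rec : ∀ x, d x = δ * ∫ y, d y ∂(K (x, π x)) := by
      intro x
      have hWi : Integrable W (K (x, π x)) :=
        (integrable_const C).mono' hW_meas.aestronglyMeasurable
          (ae_of_all _ fun y => by rw [Real.norm_eq_abs]; exact hW_bd y)
      have hVi : Integrable Vπ (K (x, π x)) :=
        (integrable_const CV).mono' hV_meas.aestronglyMeasurable
          (ae_of_all _ fun y => by rw [Real.norm_eq_abs]; exact hCV y)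
      have : ∫ y, d y ∂(K (x, π x)) = (∫ y, W y ∂(K (x, π x))) - ∫ y, Vπ y ∂(K (x, π x)) :=
        integral_sub hWi hVi
      rw [this]
      have h1 := hW_bellman x
      have h2 := hV_bellman x
      rw [hd_def]
      simp only
      rw [h1, h2]
      ring
    have hd_bd : ∀ (n : ℕ) (x : S), |d x| ≤ δ ^ n * (C + CV) := by
      intro n
      induction n with
      | zero =>
        intro x
        rw [pow_zero, one_mul]
        calc |d x| ≤ |W x| + |Vπ x| := abs_sub _ _
          _ ≤ C + CV := add_le_add (hW_bd x) (hCV x)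
      | succ n ih =>
        intro x
        rw [hd_rec x, abs_mul, abs_of_pos hδ0]
        have : |∫ y, d y ∂(K (x, π x))| ≤ δ ^ n * (C + CV) := by
          rw [← Real.norm_eq_abs]
          calc ‖∫ y, d y ∂(K (x, π x))‖
              ≤ (δ ^ n * (C + CV)) * ((K (x, π x)) Set.univ).toReal :=
                norm_integral_le_of_norm_le_const (ae_of_all _ fun y => by
                  rw [Real.norm_eq_abs]; exact ih y)
            _ = δ ^ n * (C + CV) := by simp
        calc δ * |∫ y, d y ∂(K (x, π x))| ≤ δ * (δ ^ n * (C + CV)) :=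
              mul_le_mul_of_nonneg_left this hδ0.le
          _ = δ ^ (n + 1) * (C + CV) := by ring
    have hlim : Filter.Tendsto (fun n : ℕ => δ ^ n * (C + CV)) Filter.atTop (nhds 0) := by
      have := tendsto_pow_atTop_nhds_zero_of_lt_one hδ0.le hδ1
      simpa using this.mul_const (C + CV)
    have : |d s₀| ≤ 0 := ge_of_tendsto' hlim fun n => hd_bd n s₀
    have : d s₀ = 0 := abs_eq_zero.mp (le_antisymm this (abs_nonneg _))
    have := this
    rw [hd_def] at this
    simpa using sub_eq_zero.mp this
  -- conclude
  have hmain := key s a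
    (fun ω => ∑' t : ℕ, δ ^ t * (1 - δ) * r (ω t, if t = 0 then a else π (ω t)))
    ?_ ?_ ?_
  · rw [hmain]
    congr 1
    congr 1
    exact integral_congr_ae (ae_of_all _ fun s₁ => hWV s₁)
  · -- measurability
    apply measurable_of_tendsto_metrizable
      (f := fun n ω => ∑ t ∈ Finset.range n,
        δ ^ t * (1 - δ) * r (ω t, if t = 0 then a else π (ω t)))
    · intro n
      refine Finset.measurable_sum _ fun t _ => Measurable.const_mul ?_ _
      refine hr_meas.comp ((measurable_pi_apply t).prodMk ?_)
      split_ifs with h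
      · exact measurable_const
      · exact hπ_meas.comp (measurable_pi_apply t)
    · rw [tendsto_pi_nhds]
      intro ω
      exact (hsum _ fun t => hrC _).hasSum.tendsto_sum_nat
  · -- boundedness
    intro ω
    exact htsum_bd _ fun t => hrC _
  · -- splitting
    intro ω
    show (∑' t : ℕ, δ ^ t * (1 - δ) *
        r (prepend s ω t, if t = 0 then a else π (prepend s ω t)))
      = (1 - δ) * r (s, a) + δ * g ω
    rw [Summable.tsum_eq_zero_add (hsum _ fun t => hrC _)]
    have h1 : ∀ t : ℕ, δ ^ (t + 1) * (1 - δ) *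
        r (prepend s ω (t + 1), if t + 1 = 0 then a else π (prepend s ω (t + 1)))
        = δ * (δ ^ t * (1 - δ) * r (ω t, π (ω t))) := by
      intro t
      rw [if_neg (Nat.succ_ne_zero t)]
      show δ ^ (t + 1) * (1 - δ) * r (ω t, π (ω t)) = _
      ring
    simp only [h1]
    rw [tsum_mul_left]
    show δ ^ 0 * (1 - δ) * r (s, a) + δ * g ω = _
    rw [pow_zero, one_mul]
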